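/- Let x ∈ [0,1]^n and for each B ⊆ [n] let p(B) = ∏_{i∈B} x_i · ∏_{j∉B}(1−x_j). Suppose that for each B ⊆ [n] there is a probability distribution q_B on the subsets of B (q_B(A) ≥ 0 and Σ_{A⊆B} q_B(A) = 1), and let β ∈ [0,1], such that: (Marginal property) for every i ∈ [n], Σ_{B⊆[n]} p(B) Σ_{A⊆B : i∈A} q_B(A) ≥ β · Σ_{B⊆[n] : i∈B} p(B); and (Monotonicity) for all B ⊆ B' ⊆ [n] and every i ∈ B, Σ_{A⊆B : i∈A} q_B(A) ≥ Σ_{A'⊆B' : i∈A'} q_{B'}(A'). Then for every monotone submodular function f : 2^{[n]} → ℝ_{≥0}: Σ_{B⊆[n]} p(B) Σ_{A⊆B} q_B(A) f(A) ≥ β · Σ_{B⊆[n]} p(B) f(B). -/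

import Mathlib

open Finset
open scoped Classical BigOperators

/-- Probability of the subset `B` under the product distribution on subsets of
`Fin n` with marginal probabilities `x`. -/
noncomputable def prodP {n : ℕ} (x : Fin n → ℝ) (B : Finset (Fin n)) : ℝ :=
  (∏ i ∈ B, x i) * ∏ i ∈ Bᶜ, (1 - x i)

noncomputable def pS {n : ℕ} (x : Fin n → ℝ) (S B : Finset (Fin n)) : ℝ :=
  (∏ i ∈ B, x i) * ∏ i ∈ S \ B, (1 - x i)

lemma pS_nonneg {n : ℕ} (x : Fin n → ℝ) (hx : ∀ i, x i ∈ Set.Icc (0:ℝ) 1)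
    (S B : Finset (Fin n)) : 0 ≤ pS x S B := by
  apply mul_nonneg
  · exact prod_nonneg fun i _ => (hx i).1
  · exact prod_nonneg fun i _ => by linarith [(hx i).2]

lemma pS_sum {n : ℕ} (x : Fin n → ℝ) (S : Finset (Fin n)) :
    ∑ B ∈ S.powerset, pS x S B = 1 := by
  have := Finset.prod_add x (fun i => 1 - x i) S
  simp only [pS]
  rw [← this]
  simp

lemma pS_insert_not_mem {n : ℕ} (x : Fin n → ℝ) {S : Finset (Fin n)} {a : Fin n}
    (ha : a ∉ S) {B : Finset (Fin n)} (hB : B ⊆ S) :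
    pS x (insert a S) B = (1 - x a) * pS x S B := by
  have haB : a ∉ B := fun h => ha (hB h)
  have h1 : insert a S \ B = insert a (S \ B) := by
    ext j; simp only [mem_sdiff, mem_insert]
    constructor
    · rintro ⟨h1 | h1, h2⟩
      · exact Or.inl h1
      · exact Or.inr ⟨h1, h2⟩
    · rintro (rfl | ⟨h1, h2⟩)
      · exact ⟨Or.inl rfl, haB⟩
      · exact ⟨Or.inr h1, h2⟩
  have h2 : a ∉ S \ B := by simp [ha]
  rw [pS, h1, prod_insert h2, pS]; ring

lemma pS_insert_mem {n : ℕ} (x : Fin n → ℝ) {S : Finset (Fin n)} {a : Fin n}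
    (ha : a ∉ S) {B : Finset (Fin n)} (hB : B ⊆ S) :
    pS x (insert a S) (insert a B) = x a * pS x S B := by
  have haB : a ∉ B := fun h => ha (hB h)
  have h1 : insert a S \ insert a B = S \ B := by
    ext j; simp only [mem_sdiff, mem_insert, not_or]
    constructor
    · rintro ⟨h1 | h1, h2, h3⟩
      · exact absurd h1 h2
      · exact ⟨h1, h3⟩
    · rintro ⟨h1, h2⟩
      exact ⟨Or.inr h1, fun h => ha (h ▸ h1), h2⟩
  rw [pS, h1, prod_insert haB, pS]; ring

lemma harris {n : ℕ} (x : Fin n → ℝ) (hx : ∀ i, x i ∈ Set.Icc (0:ℝ) 1)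
    (S : Finset (Fin n)) (φ ψ : Finset (Fin n) → ℝ)
    (hφ : ∀ A B : Finset (Fin n), A ⊆ B → φ B ≤ φ A)
    (hψ : ∀ A B : Finset (Fin n), A ⊆ B → ψ B ≤ ψ A) :
    (∑ B ∈ S.powerset, pS x S B * φ B) * (∑ B ∈ S.powerset, pS x S B * ψ B)
      ≤ ∑ B ∈ S.powerset, pS x S B * (φ B * ψ B) := by
  induction S using Finset.induction_on generalizing φ ψ with
  | empty => simp [pS]
  | @insert a S ha ih =>
    rw [sum_powerset_insert ha, sum_powerset_insert ha, sum_powerset_insert ha]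
    have rw0 : ∀ (g : Finset (Fin n) → ℝ),
        ∑ B ∈ S.powerset, pS x (insert a S) B * g B
          = (1 - x a) * ∑ B ∈ S.powerset, pS x S B * g B := by
      intro g
      rw [mul_sum]
      exact sum_congr rfl fun B hB => by
        rw [pS_insert_not_mem x ha (mem_powerset.mp hB)]; ring
    have rw1 : ∀ (g : Finset (Fin n) → ℝ),
        ∑ B ∈ S.powerset, pS x (insert a S) (insert a B) * g (insert a B)
          = x a * ∑ B ∈ S.powerset, pS x S B * g (insert a B) := by
      intro g
      rw [mul_sum]
      exact sum_congr rfl fun B hB => by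
        rw [pS_insert_mem x ha (mem_powerset.mp hB)]; ring
    rw [rw0, rw1, rw0, rw1, rw0 (fun B => φ B * ψ B), rw1 (fun B => φ B * ψ B)]
    set F0 := ∑ B ∈ S.powerset, pS x S B * φ B with hF0
    set F1 := ∑ B ∈ S.powerset, pS x S B * φ (insert a B) with hF1
    set G0 := ∑ B ∈ S.powerset, pS x S B * ψ B with hG0
    set G1 := ∑ B ∈ S.powerset, pS x S B * ψ (insert a B) with hG1
    have h0 : F0 * G0 ≤ ∑ B ∈ S.powerset, pS x S B * (φ B * ψ B) := ih φ ψ hφ hψ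
    have h1 : F1 * G1 ≤ ∑ B ∈ S.powerset, pS x S B * (φ (insert a B) * ψ (insert a B)) :=
      ih (fun B => φ (insert a B)) (fun B => ψ (insert a B))
        (fun A B h => hφ _ _ (insert_subset_insert _ h))
        (fun A B h => hψ _ _ (insert_subset_insert _ h))
    have hF : F1 ≤ F0 := sum_le_sum fun B _ =>
      mul_le_mul_of_nonneg_left (hφ _ _ (subset_insert a B)) (pS_nonneg x hx S B)
    have hG : G1 ≤ G0 := sum_le_sum fun B _ =>
      mul_le_mul_of_nonneg_left (hψ _ _ (subset_insert a B)) (pS_nonneg x hx S B)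
    have hxa0 : (0:ℝ) ≤ x a := (hx a).1
    have hxa1 : x a ≤ 1 := (hx a).2
    nlinarith [mul_nonneg (mul_nonneg hxa0 (by linarith : (0:ℝ) ≤ 1 - x a))
        (mul_nonneg (sub_nonneg.mpr hF) (sub_nonneg.mpr hG)),
      mul_le_mul_of_nonneg_left h0 (by linarith : (0:ℝ) ≤ 1 - x a),
      mul_le_mul_of_nonneg_left h1 hxa0]

lemma marg_lemma {n : ℕ} (f : Finset (Fin n) → ℝ)
    (hsub : ∀ A B : Finset (Fin n), f (A ∪ B) + f (A ∩ B) ≤ f A + f B)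
    {T T' : Finset (Fin n)} (hTT' : T ⊆ T') {i : Fin n} (hi : i ∉ T') :
    f (insert i T') - f T' ≤ f (insert i T) - f T := by
  have h := hsub (insert i T) T'
  have hu : insert i T ∪ T' = insert i T' := by
    rw [insert_union, union_eq_right.mpr hTT']
  have hint : insert i T ∩ T' = T := by
    ext j; simp only [mem_inter, mem_insert]
    constructor
    · rintro ⟨rfl | hj, hj'⟩
      · exact absurd hj' hi
      · exact hj
    · intro hj; exact ⟨Or.inr hj, hTT' hj⟩
  rw [hu, hint] at h
  linarith

lemma telescope {n : ℕ} (f : Finset (Fin n) → ℝ) (R : Finset (Fin n)) :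
    f R = f ∅ + ∑ i ∈ R, (f (R ∩ Finset.Iic i) - f (R ∩ Finset.Iio i)) := by
  induction R using Finset.strongInductionOn with
  | _ R ih =>
    rcases R.eq_empty_or_nonempty with rfl | hR
    · simp
    · set m := R.max' hR with hm
      have hmR : m ∈ R := R.max'_mem hR
      set R' := R.erase m with hR'
      have hss : R' ⊂ R := erase_ssubset hmR
      have key1 : R ∩ Finset.Iic m = R := by
        apply inter_eq_left.mpr
        intro j hj
        exact mem_Iic.mpr (le_max' R j hj)
      have key2 : R ∩ Finset.Iio m = R' := by
        ext j; simp only [mem_inter, mem_Iio, hR', mem_erase]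
        constructor
        · rintro ⟨hj, hlt⟩; exact ⟨ne_of_lt hlt, hj⟩
        · rintro ⟨hne, hj⟩; exact ⟨hj, lt_of_le_of_ne (le_max' R j hj) hne⟩
      have key3 : ∀ i ∈ R', R ∩ Finset.Iic i = R' ∩ Finset.Iic i ∧
          R ∩ Finset.Iio i = R' ∩ Finset.Iio i := by
        intro i hi
        have him : i < m := by
          rcases mem_erase.mp hi with ⟨hne, hiR⟩
          exact lt_of_le_of_ne (le_max' R i hiR) hne
        constructor
        · ext j; simp only [mem_inter, mem_Iic, hR', mem_erase]
          constructor
          · rintro ⟨hj, hle⟩; exact ⟨⟨ne_of_lt (lt_of_le_of_lt hle him), hj⟩, hle⟩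
          · rintro ⟨⟨_, hj⟩, hle⟩; exact ⟨hj, hle⟩
        · ext j; simp only [mem_inter, mem_Iio, hR', mem_erase]
          constructor
          · rintro ⟨hj, hle⟩; exact ⟨⟨ne_of_lt (lt_trans hle him), hj⟩, hle⟩
          · rintro ⟨⟨_, hj⟩, hle⟩; exact ⟨hj, hle⟩
      have hsum : ∑ i ∈ R, (f (R ∩ Finset.Iic i) - f (R ∩ Finset.Iio i))
          = (f R - f R') + ∑ i ∈ R', (f (R' ∩ Finset.Iic i) - f (R' ∩ Finset.Iio i)) := by
        rw [← Finset.add_sum_erase _ _ hmR, key1, key2, ← hR']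
        congr 1
        exact sum_congr rfl fun i hi => by rw [(key3 i hi).1, (key3 i hi).2]
      rw [hsum]
      have := ih R' hss
      linarith

lemma inter_Iic_eq_insert {n : ℕ} {A : Finset (Fin n)} {i : Fin n} (hi : i ∈ A) :
    A ∩ Finset.Iic i = insert i (A ∩ Finset.Iio i) := by
  ext j
  simp only [mem_inter, mem_Iic, mem_insert, mem_Iio]
  constructor
  · rintro ⟨hj, hle⟩
    rcases eq_or_lt_of_le hle with rfl | hlt
    · exact Or.inl rfl
    · exact Or.inr ⟨hj, hlt⟩
  · rintro (rfl | ⟨hj, hlt⟩)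
    · exact ⟨hi, le_refl _⟩
    · exact ⟨hj, le_of_lt hlt⟩

lemma sum_insert_bij {n : ℕ} (i : Fin n) (F : Finset (Fin n) → ℝ) :
    ∑ B ∈ univ.filter (fun B : Finset (Fin n) => i ∈ B), F B
      = ∑ B' ∈ (univ.erase i).powerset, F (insert i B') := by
  refine Finset.sum_bij' (fun B _ => B.erase i) (fun B' _ => insert i B') ?_ ?_ ?_ ?_ ?_
  · intro B hB
    simp only [mem_powerset]
    exact erase_subset_erase _ (subset_univ B)
  · intro B' hB'
    simp only [mem_filter, mem_univ, true_and]
    exact mem_insert_self i B'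
  · intro B hB
    simp only [mem_filter, mem_univ, true_and] at hB
    exact insert_erase hB
  · intro B' hB'
    simp only [mem_powerset] at hB'
    have : i ∉ B' := fun h => (mem_erase.mp (hB' h)).1 rfl
    exact erase_insert this
  · intro B hB
    simp only [mem_filter, mem_univ, true_and] at hB
    rw [insert_erase hB]

lemma swap_sum {n : ℕ} (P : Finset (Finset (Fin n))) (w : Finset (Fin n) → ℝ)
    (g : Fin n → ℝ) :
    ∑ A ∈ P, w A * ∑ i ∈ A, g i
      = ∑ i : Fin n, (∑ A ∈ P.filter (fun A => i ∈ A), w A) * g i := by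
  have : ∀ A ∈ P, w A * ∑ i ∈ A, g i = ∑ i : Fin n, if i ∈ A then w A * g i else 0 := by
    intro A _
    rw [mul_sum, sum_ite_mem, univ_inter]
  rw [sum_congr rfl this, Finset.sum_comm]
  apply sum_congr rfl
  intro i _
  rw [sum_mul, sum_filter]

lemma swap_sum2 {n : ℕ} (P : Finset (Finset (Fin n))) (w : Finset (Fin n) → ℝ)
    (g : Fin n → Finset (Fin n) → ℝ) :
    ∑ B ∈ P, w B * ∑ i ∈ B, g i B
      = ∑ i : Fin n, ∑ B ∈ P.filter (fun B => i ∈ B), w B * g i B := by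
  have : ∀ B ∈ P, w B * ∑ i ∈ B, g i B = ∑ i : Fin n, if i ∈ B then w B * g i B else 0 := by
    intro B _
    rw [mul_sum, sum_ite_mem, univ_inter]
  rw [sum_congr rfl this, Finset.sum_comm]
  apply sum_congr rfl
  intro i _
  rw [sum_filter]

/-- generalized fractional subadditivity: choose `B ⊆ [n]` from
a product distribution with marginals `x`, then retain `A ⊆ B` with probability
`q B A`.  If the retention scheme satisfies the Marginal property (each item is
retained, given that it is sampled, with probability at least `β`) and the
Monotonicity property, then for every nonnegative monotone submodular `f`,
`E[f(A)] ≥ β · E[f(B)]`. -/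
theorem generalized_fractional_subadditivity (n : ℕ)
    (x : Fin n → ℝ) (hx : ∀ i, x i ∈ Set.Icc (0:ℝ) 1)
    (q : Finset (Fin n) → Finset (Fin n) → ℝ)
    (hq0 : ∀ B A : Finset (Fin n), 0 ≤ q B A)
    (hqsupp : ∀ B A : Finset (Fin n), ¬ A ⊆ B → q B A = 0)
    (hq1 : ∀ B : Finset (Fin n), ∑ A ∈ B.powerset, q B A = 1)
    (β : ℝ) (hβ : β ∈ Set.Icc (0:ℝ) 1)
    (hmarg : ∀ i : Fin n,
      ∑ B : Finset (Fin n), prodP x B * ∑ A ∈ B.powerset.filter (fun A => i ∈ A), q B A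
        ≥ β * ∑ B ∈ univ.filter (fun B : Finset (Fin n) => i ∈ B), prodP x B)
    (hmonot : ∀ B B' : Finset (Fin n), B ⊆ B' → ∀ i ∈ B,
      ∑ A ∈ B.powerset.filter (fun A => i ∈ A), q B A
        ≥ ∑ A ∈ B'.powerset.filter (fun A => i ∈ A), q B' A)
    (f : Finset (Fin n) → ℝ)
    (hmono : ∀ A B : Finset (Fin n), A ⊆ B → f A ≤ f B)
    (hsub : ∀ A B : Finset (Fin n), f (A ∪ B) + f (A ∩ B) ≤ f A + f B)
    (hnn : ∀ A : Finset (Fin n), 0 ≤ f A) :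
    ∑ B : Finset (Fin n), prodP x B * ∑ A ∈ B.powerset, q B A * f A
      ≥ β * ∑ B : Finset (Fin n), prodP x B * f B := by
  -- notation
  set c : Fin n → Finset (Fin n) → ℝ :=
    fun i B => ∑ A ∈ B.powerset.filter (fun A => i ∈ A), q B A with hc_def
  set g : Fin n → Finset (Fin n) → ℝ :=
    fun i B => f (insert i (B ∩ Finset.Iio i)) - f (B ∩ Finset.Iio i) with hg_def
  -- basic facts about the measure
  have hp_eq : ∀ B : Finset (Fin n), prodP x B = pS x univ B := by
    intro B
    simp [prodP, pS, compl_eq_univ_sdiff]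
  have hp0 : ∀ B : Finset (Fin n), 0 ≤ prodP x B := by
    intro B; rw [hp_eq]; exact pS_nonneg x hx _ _
  have hptot : ∑ B : Finset (Fin n), prodP x B = 1 := by
    rw [← powerset_univ]
    rw [sum_congr rfl fun B _ => hp_eq B]
    exact pS_sum x univ
  -- basic facts about g and c
  have hg0 : ∀ i B, 0 ≤ g i B := by
    intro i B
    simp only [hg_def]
    have := hmono _ _ (subset_insert i (B ∩ Finset.Iio i))
    linarith
  have hganti : ∀ i (B B' : Finset (Fin n)), B ⊆ B' → g i B' ≤ g i B := by
    intro i B B' h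
    exact marg_lemma f hsub (inter_subset_inter h (Finset.Subset.refl _))
      (fun hcon => absurd (mem_Iio.mp (mem_inter.mp hcon).2) (lt_irrefl i))
  have hczero : ∀ i (B : Finset (Fin n)), i ∉ B → c i B = 0 := by
    intro i B hiB
    apply sum_eq_zero
    intro A hA
    rw [mem_filter, mem_powerset] at hA
    exact absurd (hA.1 hA.2) hiB
  have hc0 : ∀ i B, 0 ≤ c i B := fun i B => sum_nonneg fun A _ => hq0 B A
  -- f R = f ∅ + ∑_{i ∈ R} g i R
  have hfB : ∀ R : Finset (Fin n), f R = f ∅ + ∑ i ∈ R, g i R := by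
    intro R
    rw [telescope f R]
    congr 1
    refine sum_congr rfl fun i hi => ?_
    rw [inter_Iic_eq_insert hi]
  -- Step 1 : per-B lower bound on the inner expectation
  have claimB : ∀ B : Finset (Fin n),
      f ∅ + ∑ i : Fin n, c i B * g i B ≤ ∑ A ∈ B.powerset, q B A * f A := by
    intro B
    have key : ∀ A ∈ B.powerset, f ∅ + ∑ i ∈ A, g i B ≤ f A := by
      intro A hA
      rw [mem_powerset] at hA
      rw [telescope f A]
      have : ∀ i ∈ A, g i B ≤ f (A ∩ Finset.Iic i) - f (A ∩ Finset.Iio i) := by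
        intro i hi
        rw [inter_Iic_eq_insert hi]
        exact marg_lemma f hsub (inter_subset_inter hA (Finset.Subset.refl _))
          (fun hcon => absurd (mem_Iio.mp (mem_inter.mp hcon).2) (lt_irrefl i))
      linarith [sum_le_sum this]
    calc f ∅ + ∑ i : Fin n, c i B * g i B
        = ∑ A ∈ B.powerset, q B A * (f ∅ + ∑ i ∈ A, g i B) := by
          simp only [mul_add, sum_add_distrib, ← sum_mul, hq1 B, one_mul]
          rw [swap_sum B.powerset (q B) (fun i => g i B)]
      _ ≤ ∑ A ∈ B.powerset, q B A * f A :=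
          sum_le_sum fun A hA => mul_le_mul_of_nonneg_left (key A hA) (hq0 B A)
  -- Step 3 : per-coordinate claim via Harris
  have claimI : ∀ i : Fin n,
      β * ∑ B ∈ univ.filter (fun B : Finset (Fin n) => i ∈ B), prodP x B * g i B
        ≤ ∑ B : Finset (Fin n), prodP x B * (c i B * g i B) := by
    intro i
    set S := univ.erase i with hS_def
    have hiS : i ∉ S := notMem_erase i univ
    have hmeas : ∀ B' ∈ S.powerset, prodP x (insert i B') = x i * pS x S B' := by
      intro B' hB'
      rw [mem_powerset] at hB'
      have hiB' : i ∉ B' := fun h => hiS (hB' h)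
      have hcompl : (insert i B')ᶜ = S \ B' := by
        ext j
        simp only [mem_compl, mem_insert, not_or, mem_sdiff, hS_def, mem_erase, mem_univ,
          and_true, true_and]
      rw [prodP, hcompl, prod_insert hiB', pS]
      ring
    set φ : Finset (Fin n) → ℝ := fun B' => c i (insert i B') with hφ_def
    set ψ : Finset (Fin n) → ℝ := fun B' => g i (insert i B') with hψ_def
    have hφanti : ∀ A B : Finset (Fin n), A ⊆ B → φ B ≤ φ A := by
      intro A B h
      exact hmonot (insert i A) (insert i B) (insert_subset_insert _ h) i (mem_insert_self _ _)
    have hψanti : ∀ A B : Finset (Fin n), A ⊆ B → ψ B ≤ ψ A := by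
      intro A B h
      exact hganti i _ _ (insert_subset_insert _ h)
    have hψ0 : ∀ B', 0 ≤ ψ B' := fun B' => hg0 i _
    -- restrict sums to sets containing i
    have hrestrict : ∀ (F : Fin n → Finset (Fin n) → ℝ),
        (∀ B, i ∉ B → F i B = 0) →
        ∑ B : Finset (Fin n), F i B
          = ∑ B ∈ univ.filter (fun B : Finset (Fin n) => i ∈ B), F i B := by
      intro F hF
      rw [← sum_filter_add_sum_filter_not univ (fun B : Finset (Fin n) => i ∈ B) (F i)]
      have : ∑ B ∈ univ.filter (fun B : Finset (Fin n) => ¬ i ∈ B), F i B = 0 :=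
        sum_eq_zero fun B hB => hF B (mem_filter.mp hB).2
      rw [this, add_zero]
    have hLHS : ∑ B : Finset (Fin n), prodP x B * (c i B * g i B)
        = x i * ∑ B' ∈ S.powerset, pS x S B' * (φ B' * ψ B') := by
      rw [hrestrict (fun i B => prodP x B * (c i B * g i B))
        (fun B hB => by rw [hczero i B hB]; ring)]
      rw [sum_insert_bij i (fun B => prodP x B * (c i B * g i B)), mul_sum]
      exact sum_congr rfl fun B' hB' => by rw [hmeas B' hB']; ring
    have hGsum : ∑ B ∈ univ.filter (fun B : Finset (Fin n) => i ∈ B), prodP x B * g i B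
        = x i * ∑ B' ∈ S.powerset, pS x S B' * ψ B' := by
      rw [sum_insert_bij i (fun B => prodP x B * g i B), mul_sum]
      exact sum_congr rfl fun B' hB' => by rw [hmeas B' hB']; ring
    have hMarg : β * x i ≤ x i * ∑ B' ∈ S.powerset, pS x S B' * φ B' := by
      have h1 := hmarg i
      have h2 : ∑ B : Finset (Fin n), prodP x B * c i B
          = x i * ∑ B' ∈ S.powerset, pS x S B' * φ B' := by
        rw [hrestrict (fun i B => prodP x B * c i B)
          (fun B hB => by rw [hczero i B hB]; ring)]
        rw [sum_insert_bij i (fun B => prodP x B * c i B), mul_sum]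
        exact sum_congr rfl fun B' hB' => by rw [hmeas B' hB']; ring
      have h3 : ∑ B ∈ univ.filter (fun B : Finset (Fin n) => i ∈ B), prodP x B = x i := by
        rw [sum_insert_bij i (fun B => prodP x B)]
        rw [sum_congr rfl fun B' hB' => hmeas B' hB', ← mul_sum, pS_sum, mul_one]
      rw [h2, h3] at h1
      linarith [h1]
    rw [hLHS, hGsum]
    rcases eq_or_lt_of_le (hx i).1 with hxi | hxi
    · rw [← hxi]; ring_nf; exact le_refl _
    · have hφβ : β ≤ ∑ B' ∈ S.powerset, pS x S B' * φ B' := by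
        have := (mul_le_mul_iff_right₀ hxi).mp (by linarith [hMarg] :
          x i * β ≤ x i * ∑ B' ∈ S.powerset, pS x S B' * φ B')
        exact this
      have hψsum0 : 0 ≤ ∑ B' ∈ S.powerset, pS x S B' * ψ B' :=
        sum_nonneg fun B' _ => mul_nonneg (pS_nonneg x hx _ _) (hψ0 B')
      have hhar := harris x hx S φ ψ hφanti hψanti
      have : β * ∑ B' ∈ S.powerset, pS x S B' * ψ B'
          ≤ ∑ B' ∈ S.powerset, pS x S B' * (φ B' * ψ B') := by
        calc β * ∑ B' ∈ S.powerset, pS x S B' * ψ B'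
            ≤ (∑ B' ∈ S.powerset, pS x S B' * φ B') * ∑ B' ∈ S.powerset, pS x S B' * ψ B' :=
              mul_le_mul_of_nonneg_right hφβ hψsum0
          _ ≤ _ := hhar
      calc β * (x i * ∑ B' ∈ S.powerset, pS x S B' * ψ B')
          = x i * (β * ∑ B' ∈ S.powerset, pS x S B' * ψ B') := by ring
        _ ≤ x i * ∑ B' ∈ S.powerset, pS x S B' * (φ B' * ψ B') :=
            mul_le_mul_of_nonneg_left this (le_of_lt hxi)
  -- assemble
  have expandRHS : ∑ B : Finset (Fin n), prodP x B * f B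
      = f ∅ + ∑ i : Fin n,
          ∑ B ∈ univ.filter (fun B : Finset (Fin n) => i ∈ B), prodP x B * g i B := by
    calc ∑ B : Finset (Fin n), prodP x B * f B
        = ∑ B : Finset (Fin n), (prodP x B * f ∅ + prodP x B * ∑ i ∈ B, g i B) := by
          exact sum_congr rfl fun B _ => by rw [hfB B]; ring
      _ = (∑ B : Finset (Fin n), prodP x B) * f ∅
            + ∑ B : Finset (Fin n), prodP x B * ∑ i ∈ B, g i B := by
          rw [sum_add_distrib, sum_mul]
      _ = f ∅ + ∑ i : Fin n,
            ∑ B ∈ univ.filter (fun B : Finset (Fin n) => i ∈ B), prodP x B * g i B := by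
          rw [hptot, one_mul, swap_sum2 univ (prodP x) g]
  have expandLHS : f ∅ + ∑ i : Fin n, ∑ B : Finset (Fin n), prodP x B * (c i B * g i B)
      ≤ ∑ B : Finset (Fin n), prodP x B * ∑ A ∈ B.powerset, q B A * f A := by
    have h2 : ∑ B : Finset (Fin n), prodP x B * (f ∅ + ∑ i : Fin n, c i B * g i B)
        = f ∅ + ∑ i : Fin n, ∑ B : Finset (Fin n), prodP x B * (c i B * g i B) := by
      calc ∑ B : Finset (Fin n), prodP x B * (f ∅ + ∑ i : Fin n, c i B * g i B)
          = ∑ B : Finset (Fin n), (prodP x B * f ∅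
              + ∑ i : Fin n, prodP x B * (c i B * g i B)) := by
            exact sum_congr rfl fun B _ => by rw [mul_add, mul_sum]
        _ = (∑ B : Finset (Fin n), prodP x B) * f ∅
              + ∑ B : Finset (Fin n), ∑ i : Fin n, prodP x B * (c i B * g i B) := by
            rw [sum_add_distrib, sum_mul]
        _ = f ∅ + ∑ i : Fin n, ∑ B : Finset (Fin n), prodP x B * (c i B * g i B) := by
            rw [hptot, one_mul, Finset.sum_comm]
    rw [← h2]
    exact sum_le_sum fun B _ => mul_le_mul_of_nonneg_left (claimB B) (hp0 B)
  rw [ge_iff_le, expandRHS, mul_add, mul_sum]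
  have hsumle : ∑ i : Fin n,
      β * ∑ B ∈ univ.filter (fun B : Finset (Fin n) => i ∈ B), prodP x B * g i B
        ≤ ∑ i : Fin n, ∑ B : Finset (Fin n), prodP x B * (c i B * g i B) :=
    sum_le_sum fun i _ => claimI i
  have hf0 : β * f ∅ ≤ f ∅ := by
    have := mul_le_mul_of_nonneg_right hβ.2 (hnn ∅)
    linarith
  linarith
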